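/- Let X be a set, φ, λ : X → [0,∞] and b ∈ [0,∞). (i) If λ(x) ≤ b for all x ∈ X, then ρ_X(φ, b_X ⊖ λ) = b ⊖ (λ ⋔ φ), where b_X ⊖ λ is the pointwise truncated difference x ↦ b ⊖ λ(x). (ii) If φ ⋔ λ ≤ b, then φ ⋔ λ = b ⊖ ρ_X(φ, b_X ⊖ λ). -/
import Mathlib

open scoped ENNReal
open Set Classical

noncomputable section

/-- `ρ_X(l, m) = sup_x (m x ⊖ l x)` on `[0,∞] = ℝ≥0∞` (with truncated subtraction). -/
def rho {X : Type*} (l m : X → ℝ≥0∞) : ℝ≥0∞ := ⨆ x, m x - l x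

/-- `l ⋔ m = inf_x (l x + m x)` (inf over the empty set is `∞`). -/
def pitchfork {X : Type*} (l m : X → ℝ≥0∞) : ℝ≥0∞ := ⨅ x, l x + m x

theorem rho_pitchfork_duality {X : Type*} (f l : X → ℝ≥0∞) (b : ℝ≥0∞) (hb : b ≠ ⊤) :
    ((∀ x, l x ≤ b) → rho f (fun x => b - l x) = b - pitchfork l f) ∧
    (pitchfork f l ≤ b → pitchfork f l = b - rho f (fun x => b - l x)) := by
  have key : rho f (fun x => b - l x) = b - pitchfork l f := by
    rw [rho, pitchfork, ENNReal.sub_iInf]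
    exact iSup_congr fun x => tsub_tsub b (l x) (f x)
  have hcomm : pitchfork f l = pitchfork l f := by
    simp [pitchfork, add_comm]
  refine ⟨fun _ => key, fun h => ?_⟩
  rw [key, ← hcomm, ENNReal.sub_sub_cancel hb h]
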